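/- Let V be a finite-dimensional Lie algebra over a field k, let 0 = V_0 ⊆ V_1 ⊆ ⋯ ⊆ V_n = V be an increasing chain of Lie ideals of V with dim_k(V_i/V_{i−1}) ≤ 1 for all 1 ≤ i ≤ n, and let B : V × V → k be an alternating bilinear form which is a 2-cocycle, i.e. B(⁅x, y⁆, z) + B(⁅y, z⁆, x) + B(⁅z, x⁆, y) = 0 for all x, y, z ∈ V. For each i set K_i := {v ∈ V_i : B(v, w) = 0 for all w ∈ V_i}. Then the subspace L := K_1 + K_2 + ⋯ + K_n is a Lie subalgebra of V. -/

import Mathlib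

/-- The orthogonal complement of a subspace with respect to a bilinear form. -/
def orthogonalCompl {k V : Type*} [Field k] [AddCommGroup V] [Module k V]
    (B : V →ₗ[k] V →ₗ[k] k) (W : Submodule k V) : Submodule k V where
  carrier := {v : V | ∀ w ∈ W, B v w = 0}
  add_mem' := by
    intro a b ha hb
    simp only [Set.mem_setOf_eq] at *
    intro w hw
    rw [map_add, LinearMap.add_apply, ha w hw, hb w hw, add_zero]
  zero_mem' := by
    simp only [Set.mem_setOf_eq]
    intro w hw
    rw [map_zero, LinearMap.zero_apply]
  smul_mem' := by
    intro c a ha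
    simp only [Set.mem_setOf_eq] at *
    intro w hw
    rw [map_smul, LinearMap.smul_apply, ha w hw, smul_zero]

/-- Vergne's theorem for `2`-cocycles: if `V` is a finite-dimensional Lie algebra with a
chain of Lie ideals `0 = V_0 ⊆ V_1 ⊆ ⋯ ⊆ V_n = V` whose successive quotients have
dimension at most `1`, and `B` is an alternating `2`-cocycle on `V`, then
`L = Σ_i Ker (B|_{V_i})` is a Lie subalgebra of `V`. -/
theorem vergne_cocycle_lie_subalgebra
    {k V : Type*} [Field k] [LieRing V] [LieAlgebra k V] [FiniteDimensional k V]
    (n : ℕ) (I : ℕ → LieIdeal k V)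
    (h0 : I 0 = ⊥) (hn : I n = ⊤)
    (hmono : ∀ i < n, I i ≤ I (i + 1))
    (hstep : ∀ i < n,
      Module.rank k (↥(I (i + 1) : Submodule k V) ⧸
        Submodule.comap (I (i + 1) : Submodule k V).subtype (I i : Submodule k V)) ≤ 1)
    (B : V →ₗ[k] V →ₗ[k] k) (halt : ∀ v : V, B v v = 0)
    (hcocycle : ∀ x y z : V, B ⁅x, y⁆ z + B ⁅y, z⁆ x + B ⁅z, x⁆ y = 0) :
    ∀ x y : V,
      x ∈ (⨆ i ∈ Finset.Icc 1 n,
        ((I i : Submodule k V) ⊓ orthogonalCompl B (I i : Submodule k V))) →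
      y ∈ (⨆ i ∈ Finset.Icc 1 n,
        ((I i : Submodule k V) ⊓ orthogonalCompl B (I i : Submodule k V))) →
      ⁅x, y⁆ ∈ (⨆ i ∈ Finset.Icc 1 n,
        ((I i : Submodule k V) ⊓ orthogonalCompl B (I i : Submodule k V))) := by
  intro x y hx hy
  have hskew : ∀ a b : V, B a b = - B b a := by
    intro a b
    have h := halt (a + b)
    simp only [map_add, LinearMap.add_apply, halt a, halt b] at h
    linear_combination h
  have hlie : ∀ (i : ℕ) (a b : V), a ∈ (I i : Submodule k V) →
      ⁅b, a⁆ ∈ (I i : Submodule k V) := by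
    intro i a b ha
    rw [LieIdeal.toLieSubalgebra_toSubmodule, LieSubmodule.mem_toSubmodule] at *
    exact (I i).lie_mem ha
  have hmono' : ∀ i j, i ≤ j → j ≤ n → (I i : Submodule k V) ≤ (I j : Submodule k V) := by
    intro i j hij hjn
    induction j with
    | zero =>
      interval_cases i
      exact le_refl _
    | succ j ih =>
      rcases Nat.lt_or_ge i (j + 1) with h | h
      · refine le_trans (ih (Nat.lt_succ_iff.mp h) (by omega)) ?_
        have hm := hmono j (by omega)
        intro v hv
        rw [LieIdeal.toLieSubalgebra_toSubmodule, LieSubmodule.mem_toSubmodule] at *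
        exact hm hv
      · have heq : i = j + 1 := le_antisymm hij h
        rw [heq]
  set M : ℕ → Submodule k V :=
    fun i => (I i : Submodule k V) ⊓ orthogonalCompl B (I i : Submodule k V) with hM
  set L : Submodule k V := ⨆ i ∈ Finset.Icc 1 n, M i with hL
  -- key : bracket of generators lands in a generator
  have key : ∀ i j, i ≤ j → j ≤ n → ∀ a ∈ M i, ∀ b ∈ M j, ⁅a, b⁆ ∈ M i := by
    intro i j hij hjn a ha b hb
    obtain ⟨haI, haO⟩ := ha
    obtain ⟨hbI, hbO⟩ := hb
    constructor
    · have hba : ⁅b, a⁆ ∈ (I i : Submodule k V) := hlie i a b haI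
      have h2 : (-⁅b, a⁆ : V) ∈ (I i : Submodule k V) := neg_mem hba
      rw [show (⁅a, b⁆ : V) = -⁅b, a⁆ from (lie_skew a b).symm]
      exact h2
    · intro w hw
      have hc := hcocycle a b w
      have h1 : B ⁅b, w⁆ a = 0 := by
        have hbw : ⁅b, w⁆ ∈ (I i : Submodule k V) := hlie i w b hw
        rw [hskew, haO _ hbw, neg_zero]
      have h2 : B ⁅w, a⁆ b = 0 := by
        have hwa : ⁅w, a⁆ ∈ (I j : Submodule k V) := hmono' i j hij hjn (hlie i a w haI)
        rw [hskew, hbO _ hwa, neg_zero]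
      rw [h1, h2, add_zero, add_zero] at hc
      exact hc
  have hle : ∀ i ∈ Finset.Icc 1 n, M i ≤ L := by
    intro i hi
    exact le_biSup M hi
  -- bracket of a generator with any element of L
  have hgen : ∀ i ∈ Finset.Icc 1 n, ∀ a ∈ M i, ∀ v ∈ L, ⁅a, v⁆ ∈ L := by
    intro i hi a ha v hv
    rw [hL] at hv
    refine Submodule.iSup_induction (motive := fun v => ⁅a, v⁆ ∈ L)
      (fun j => ⨆ _ : j ∈ Finset.Icc 1 n, M j) hv ?_ ?_ ?_
    · intro j b hb
      have hb' : b ∈ ⨆ _ : j ∈ Finset.Icc 1 n, M j := hb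
      by_cases hj : j ∈ Finset.Icc 1 n
      · rw [iSup_pos hj] at hb'
        rcases le_total i j with hij | hji
        · exact hle i hi (key i j hij (Finset.mem_Icc.mp hj).2 a ha b hb')
        · have hba : ⁅b, a⁆ ∈ M j := key j i hji (Finset.mem_Icc.mp hi).2 b hb' a ha
          have hneg : (-⁅b, a⁆ : V) ∈ L := neg_mem (hle j hj hba)
          rw [show (⁅a, b⁆ : V) = -⁅b, a⁆ from (lie_skew a b).symm]
          exact hneg
      · rw [iSup_neg hj] at hb'
        rw [(Submodule.mem_bot k).mp hb']
        simp
    · simp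
    · intro u w hu hw
      rw [lie_add]
      exact add_mem hu hw
  rw [hL] at hx
  refine Submodule.iSup_induction (motive := fun v => ⁅v, y⁆ ∈ L)
    (fun j => ⨆ _ : j ∈ Finset.Icc 1 n, M j) hx ?_ ?_ ?_
  · intro i b hb
    have hb' : b ∈ ⨆ _ : i ∈ Finset.Icc 1 n, M i := hb
    by_cases hi : i ∈ Finset.Icc 1 n
    · rw [iSup_pos hi] at hb'
      exact hgen i hi b hb' y hy
    · rw [iSup_neg hi] at hb'
      rw [(Submodule.mem_bot k).mp hb']
      simp
  · simp
  · intro u w hu hw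
    rw [add_lie]
    exact add_mem hu hw
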